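/- Let ρ_{AB} be a bipartite state and M ∈ L(H_B) with M†M ≤ id_B. Let ρ̂_{AB} = M ρ_{AB} M† / Tr(M ρ_{AB} M†). Then D_max(ρ̂_A || ρ_A) ≤ log(1 / Tr(M ρ_{AB} M†)). -/

import Mathlib

open scoped BigOperators Kronecker ComplexOrder Matrix

/-- The square root `PosSemidef.sqrt` of the older Mathlib, spelled out. -/
noncomputable def oldPSDSqrt {ι : Type*} [Fintype ι] [DecidableEq ι] {X : Matrix ι ι ℂ}
    (hX : X.PosSemidef) : Matrix ι ι ℂ :=
  (hX.1.eigenvectorUnitary : Matrix ι ι ℂ) *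
    Matrix.diagonal ((↑) ∘ (fun x : ℝ => Real.sqrt x) ∘ hX.1.eigenvalues) *
    (star hX.1.eigenvectorUnitary : Matrix ι ι ℂ)

/-- The Schatten 1-norm (trace norm) of a complex matrix. -/
noncomputable def traceNorm {ι : Type*} [Fintype ι] [DecidableEq ι] (X : Matrix ι ι ℂ) : ℝ :=
  (oldPSDSqrt (Matrix.posSemidef_conjTranspose_mul_self X)).trace.re

/-- Positive-semidefinite square root (junk value `0` off the PSD cone). -/
noncomputable def psqrt {ι : Type*} [Fintype ι] [DecidableEq ι] (X : Matrix ι ι ℂ) :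
    Matrix ι ι ℂ :=
  open scoped Classical in
  if h : X.PosSemidef then oldPSDSqrt h else 0

/-- Max-divergence `D_max(ρ‖σ) = inf {λ : ρ ≤ 2^λ σ}`. -/
noncomputable def dMax {ι : Type*} [Fintype ι] (ρ σ : Matrix ι ι ℂ) : ℝ :=
  sInf {l : ℝ | (((2:ℝ) ^ l) • σ - ρ).PosSemidef}

/-- Conditional min-entropy `H_min(A|B)_ρ = sup {r | ∃ state σ_B, ρ ≤ 2^{-r}(id_A ⊗ σ_B)}`. -/
noncomputable def condHmin {A B : Type*} [Fintype A] [Fintype B] [DecidableEq A] [DecidableEq B]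
    (ρ : Matrix (A × B) (A × B) ℂ) : ℝ :=
  sSup {r : ℝ | ∃ σ : Matrix B B ℂ, σ.PosSemidef ∧ σ.trace = 1 ∧
    (((2:ℝ) ^ (-r)) • ((1 : Matrix A A ℂ) ⊗ₖ σ) - ρ).PosSemidef}

/-- Partial trace over the second tensor factor. -/
noncomputable def ptraceRight {A B : Type*} [Fintype B] (ρ : Matrix (A × B) (A × B) ℂ) :
    Matrix A A ℂ := Matrix.of fun a a' => ∑ b, ρ (a, b) (a', b)

/-- The maximally mixed state on `ι`. -/
noncomputable def mmix (ι : Type*) [Fintype ι] [DecidableEq ι] : Matrix ι ι ℂ :=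
  (Fintype.card ι : ℂ)⁻¹ • 1

section myaux
set_option linter.unusedSectionVars false
lemma ptrace_psd {A B : Type} [Fintype A] [DecidableEq A] [Fintype B] [DecidableEq B]  {ρ : Matrix (A × B) (A × B) ℂ} (h : ρ.PosSemidef) :
    (ptraceRight ρ).PosSemidef := by
  refine Matrix.PosSemidef.of_dotProduct_mulVec_nonneg ?_ ?_
  · ext a a'
    simp only [ptraceRight, Matrix.conjTranspose_apply, Matrix.of_apply, star_sum]
    refine Finset.sum_congr rfl fun b _ => ?_
    have := congrFun (congrFun h.1 (a,b)) (a',b)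
    simpa [Matrix.conjTranspose_apply] using this
  · intro x
    have key : (star x) ⬝ᵥ (ptraceRight ρ).mulVec x =
        ∑ b : B, (star (fun p : A × B => if p.2 = b then x p.1 else 0)) ⬝ᵥ
          ρ.mulVec (fun p : A × B => if p.2 = b then x p.1 else 0) := by
      simp only [dotProduct, Matrix.mulVec, ptraceRight, Matrix.of_apply,
        Fintype.sum_prod_type, Pi.star_apply, apply_ite (star : ℂ → ℂ), star_zero, mul_ite, mul_zero,
        ite_mul, zero_mul, Finset.sum_ite_eq', Finset.mem_univ, if_true]
      rw [Finset.sum_comm]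
      refine Finset.sum_congr rfl fun a _ => ?_
      simp only [Finset.sum_mul, Finset.mul_sum]
      exact Finset.sum_comm
    rw [key]
    exact Finset.sum_nonneg fun b _ => h.dotProduct_mulVec_nonneg _

lemma ptrace_cyc {A B : Type} [Fintype A] [DecidableEq A] [Fintype B] [DecidableEq B]
    (ρ : Matrix (A × B) (A × B) ℂ) (P Q : Matrix B B ℂ) :
    ptraceRight (((1 : Matrix A A ℂ) ⊗ₖ P) * ρ * ((1 : Matrix A A ℂ) ⊗ₖ Q)ᴴ)
      = ptraceRight (ρ * ((1 : Matrix A A ℂ) ⊗ₖ (Qᴴ * P))) := by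
  ext a a'
  simp only [ptraceRight, Matrix.of_apply, Matrix.mul_apply, Matrix.conjTranspose_apply,
    Matrix.kroneckerMap_apply, Fintype.sum_prod_type, Matrix.one_apply, star_mul',
    ite_mul, zero_mul, one_mul, mul_ite, mul_zero, mul_one, apply_ite (star : ℂ → ℂ),
    star_one, star_zero, Finset.sum_ite_irrel, Finset.sum_const_zero,
    Finset.sum_ite_eq', Finset.sum_ite_eq, Finset.mem_univ, if_true]
  simp only [Finset.sum_mul, Finset.mul_sum]
  conv_rhs => rw [Finset.sum_comm]
  conv_rhs => enter [2, x1]; rw [Finset.sum_comm]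
  conv_rhs => rw [Finset.sum_comm]
  refine Finset.sum_congr rfl fun x _ => ?_
  refine Finset.sum_congr rfl fun x1 _ => ?_
  refine Finset.sum_congr rfl fun i _ => ?_
  ring

section aux
variable {A B : Type} [Fintype A] [DecidableEq A] [Fintype B] [DecidableEq B]

lemma aux_ptrace_sub (X Y : Matrix (A × B) (A × B) ℂ) :
    ptraceRight (X - Y) = ptraceRight X - ptraceRight Y := by
  ext a a'
  simp [ptraceRight, Finset.sum_sub_distrib]

lemma aux_ptrace_smul (c : ℂ) (X : Matrix (A × B) (A × B) ℂ) :
    ptraceRight (c • X) = c • ptraceRight X := by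
  ext a a'
  simp [ptraceRight, Finset.mul_sum]

lemma aux_ptrace_trace (X : Matrix (A × B) (A × B) ℂ) :
    (ptraceRight X).trace = X.trace := by
  simp [ptraceRight, Matrix.trace, Matrix.diag, Fintype.sum_prod_type]

lemma aux_smul_psd {ι : Type} [Fintype ι] (c : ℝ) (hc : 0 ≤ c) {X : Matrix ι ι ℂ}
    (h : X.PosSemidef) : (((c : ℂ)) • X).PosSemidef := by
  refine Matrix.PosSemidef.of_dotProduct_mulVec_nonneg ?_ ?_
  · unfold Matrix.IsHermitian
    rw [Matrix.conjTranspose_smul, h.1.eq]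
    congr 1
    simp
  · intro x
    rw [Matrix.smul_mulVec, dotProduct_smul, smul_eq_mul]
    exact mul_nonneg (by exact_mod_cast hc) (h.dotProduct_mulVec_nonneg x)

lemma aux_trace_nonneg {ι : Type} [Fintype ι] [DecidableEq ι] {X : Matrix ι ι ℂ}
    (h : X.PosSemidef) : 0 ≤ X.trace := by
  refine Finset.sum_nonneg fun a _ => ?_
  have := h.dotProduct_mulVec_nonneg (Pi.single a 1)
  simpa [dotProduct, Matrix.mulVec, Pi.single_apply, Finset.sum_ite_eq,
    Finset.sum_ite_eq', apply_ite (star : ℂ → ℂ), mul_ite, ite_mul] using this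

lemma oldPSDSqrt_mul_self {ι : Type} [Fintype ι] [DecidableEq ι] {X : Matrix ι ι ℂ}
    (hX : X.PosSemidef) : oldPSDSqrt hX * oldPSDSqrt hX = X := by
  conv_rhs => rw [hX.1.spectral_theorem, Unitary.conjStarAlgAut_apply]
  simp only [oldPSDSqrt, mul_assoc]
  rw [← mul_assoc (star _ : Matrix ι ι ℂ) _, Unitary.coe_star_mul_self, one_mul,
    ← mul_assoc (Matrix.diagonal _) (Matrix.diagonal _), Matrix.diagonal_mul_diagonal]
  congr 3
  funext i
  simp only [Function.comp_apply, RCLike.ofReal_real_eq_id, id]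
  rw [← Complex.ofReal_mul, Real.mul_self_sqrt (hX.eigenvalues_nonneg i)]
  rfl

lemma oldPSDSqrt_conjTranspose {ι : Type} [Fintype ι] [DecidableEq ι] {X : Matrix ι ι ℂ}
    (hX : X.PosSemidef) : (oldPSDSqrt hX)ᴴ = oldPSDSqrt hX := by
  simp only [oldPSDSqrt, Matrix.conjTranspose_mul, Matrix.diagonal_conjTranspose, mul_assoc]
  congr 2
  · rw [Matrix.star_eq_conjTranspose, Matrix.conjTranspose_conjTranspose]
  · congr 1
    funext i
    simp only [Pi.star_apply, Function.comp_apply, Complex.star_def, Complex.conj_ofReal]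

end aux

end myaux

/-- Fact `measuredmax`: for a bipartite state `ρ_{AB}` and `M` on `B` with
`M†M ≤ 1`, the renormalised post-measurement state `ρ̂ = MρM†/Tr(MρM†)`
satisfies `D_max(ρ̂_A ‖ ρ_A) ≤ log(1/Tr(MρM†))`. -/
theorem stmt11 {A B : Type} [Fintype A] [DecidableEq A] [Fintype B] [DecidableEq B]
    (ρ : Matrix (A × B) (A × B) ℂ)
    (hρ : ρ.PosSemidef) (hρ1 : ρ.trace = 1)
    (M : Matrix B B ℂ) (hM : ((1 : Matrix B B ℂ) - Mᴴ * M).PosSemidef)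
    (τ : ℝ) (hτ : 0 < τ)
    (hτeq : ((((1 : Matrix A A ℂ) ⊗ₖ M) * ρ * ((1 : Matrix A A ℂ) ⊗ₖ M)ᴴ).trace = (τ : ℂ))) :
    dMax
      (ptraceRight ((τ : ℂ)⁻¹ •
        (((1 : Matrix A A ℂ) ⊗ₖ M) * ρ * ((1 : Matrix A A ℂ) ⊗ₖ M)ᴴ)))
      (ptraceRight ρ) ≤ Real.logb 2 (1 / τ) := by
  classical
  set X := (((1 : Matrix A A ℂ) ⊗ₖ M) * ρ * ((1 : Matrix A A ℂ) ⊗ₖ M)ᴴ) with hX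
  set ρhat := ptraceRight ((τ : ℂ)⁻¹ • X) with hρhat
  set σ := ptraceRight ρ with hσ
  have hτ0 : (τ : ℂ) ≠ 0 := by exact_mod_cast hτ.ne'
  -- traces
  have htrσ : σ.trace = 1 := by rw [hσ, aux_ptrace_trace, hρ1]
  have htrρhat : ρhat.trace = 1 := by
    rw [hρhat, aux_ptrace_trace, Matrix.trace_smul, hτeq, smul_eq_mul,
      inv_mul_cancel₀ hτ0]
  -- key PSD fact : σ - ptraceRight X is PSD
  have hker : ((1 : Matrix A A ℂ) ⊗ₖ ((1 : Matrix B B ℂ) - Mᴴ * M))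
      = (1 : Matrix A A ℂ) ⊗ₖ (1 : Matrix B B ℂ)
        - (1 : Matrix A A ℂ) ⊗ₖ (Mᴴ * M) := by
    ext p q
    simp [Matrix.kroneckerMap_apply, mul_sub, Matrix.one_apply, Prod.ext_iff, ite_and]
    split_ifs <;> simp_all
  have hkey : (σ - ptraceRight X).PosSemidef := by
    set L := oldPSDSqrt hM with hL
    have hLL : L * L = (1 : Matrix B B ℂ) - Mᴴ * M := oldPSDSqrt_mul_self hM
    have hLH : Lᴴ = L := oldPSDSqrt_conjTranspose hM
    have h1 : ptraceRight X = ptraceRight (ρ * ((1 : Matrix A A ℂ) ⊗ₖ (Mᴴ * M))) :=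
      ptrace_cyc ρ M M
    have h2 : σ = ptraceRight (ρ * ((1 : Matrix A A ℂ) ⊗ₖ (1 : Matrix B B ℂ))) := by
      rw [Matrix.one_kronecker_one, mul_one]
    have h3 : σ - ptraceRight X
        = ptraceRight (ρ * ((1 : Matrix A A ℂ) ⊗ₖ ((1 : Matrix B B ℂ) - Mᴴ * M))) := by
      rw [h1, h2, ← aux_ptrace_sub, ← mul_sub, hker]
    have h4 : σ - ptraceRight X
        = ptraceRight (((1 : Matrix A A ℂ) ⊗ₖ L) * ρ * ((1 : Matrix A A ℂ) ⊗ₖ L)ᴴ) := by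
      rw [ptrace_cyc ρ L L, h3, hLH, hLL]
    rw [h4]
    exact ptrace_psd (hρ.mul_mul_conjTranspose_same _)
  -- membership
  have hmem : Real.logb 2 (1 / τ) ∈
      {l : ℝ | (((2:ℝ) ^ l) • σ - ρhat).PosSemidef} := by
    have h2 : (2:ℝ) ^ Real.logb 2 (1 / τ) = 1 / τ :=
      Real.rpow_logb two_pos (by norm_num) (by positivity)
    have heq : ((2:ℝ) ^ Real.logb 2 (1 / τ)) • σ - ρhat
        = ((τ : ℂ)⁻¹) • (σ - ptraceRight X) := by
      rw [h2, hρhat, aux_ptrace_smul, smul_sub]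
      congr 1
      ext a a'
      simp [Complex.real_smul, one_div]
    rw [Set.mem_setOf_eq, heq]
    have : ((τ:ℂ)⁻¹) = (((τ⁻¹ : ℝ)) : ℂ) := by push_cast; ring
    rw [this]
    exact aux_smul_psd _ (by positivity) hkey
  -- bounded below
  have hbdd : BddBelow {l : ℝ | (((2:ℝ) ^ l) • σ - ρhat).PosSemidef} := by
    refine ⟨0, fun l hl => ?_⟩
    have htr : 0 ≤ (((2:ℝ) ^ l) • σ - ρhat).trace := aux_trace_nonneg hl
    rw [Matrix.trace_sub, Matrix.trace_smul, htrσ, htrρhat] at htr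
    have : 0 ≤ ((((2:ℝ) ^ l - 1 : ℝ)) : ℂ) := by
      convert htr using 1
      push_cast
      simp [Complex.real_smul]
    rw [Complex.zero_le_real] at this
    by_contra hneg
    push_neg at hneg
    have h2 : (2:ℝ) ^ l < (2:ℝ) ^ (0:ℝ) :=
      Real.rpow_lt_rpow_left_iff one_lt_two |>.mpr hneg
    rw [Real.rpow_zero] at h2
    linarith
  exact csInf_le hbdd hmem
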